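/- For all real numbers a ∈ [0, 1) and b ≥ 1, one has B(a, b) ≥ a, where B(a, b) = 4 − ((4 − a)²/(2·(1 − a)))·(b − √(b² − 12·(1 − a)·b/(4 − a)²)). (Note that the expression under the square root is nonnegative since 12·(1 − a)/(4 − a)² ≤ 3/4 ≤ b.) -/

import Mathlib

/-- The quality-ratio bound function of the defection-free scheme. -/
noncomputable def B (a b : ℝ) : ℝ :=
  4 - ((4 - a) ^ 2 / (2 * (1 - a))) *
    (b - Real.sqrt (b ^ 2 - 12 * (1 - a) * b / (4 - a) ^ 2))

/-- for all `a ∈ [0, 1)` and `b ≥ 1`, `B(a, b) ≥ a`. -/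
theorem B_ge_self (a b : ℝ) (ha0 : 0 ≤ a) (ha1 : a < 1) (hb : 1 ≤ b) :
    B a b ≥ a := by
  have h4a : (0:ℝ) < 4 - a := by linarith
  have h1a : (0:ℝ) < 1 - a := by linarith
  have hbt : 0 ≤ b - 2 * (1 - a) / (4 - a) := by
    rw [sub_nonneg, div_le_iff₀ h4a]; nlinarith
  have hkey : b - 2 * (1 - a) / (4 - a) ≤
      Real.sqrt (b ^ 2 - 12 * (1 - a) * b / (4 - a) ^ 2) := by
    have hnn : 0 ≤ b ^ 2 - 12 * (1 - a) * b / (4 - a) ^ 2 := by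
      rw [sub_nonneg, div_le_iff₀ (by positivity)]
      have h12 : 12 * (1 - a) ≤ (4 - a) ^ 2 := by nlinarith [sq_nonneg (a + 2)]
      nlinarith [mul_le_mul_of_nonneg_right h12 (by linarith : (0:ℝ) ≤ b),
        mul_le_mul_of_nonneg_left (by nlinarith : b ≤ b ^ 2) (by positivity : (0:ℝ) ≤ (4 - a) ^ 2)]
    rw [Real.le_sqrt hbt, ← sub_nonneg]
    have heq : b ^ 2 - 12 * (1 - a) * b / (4 - a) ^ 2 - (b - 2 * (1 - a) / (4 - a)) ^ 2
        = 4 * (1 - a) ^ 2 * (b - 1) / (4 - a) ^ 2 := by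
      field_simp; ring
    rw [heq]
    have hb1 : (0:ℝ) ≤ b - 1 := by linarith
    · positivity
    · exact hnn
  unfold B
  have hC : (0:ℝ) < (4 - a) ^ 2 / (2 * (1 - a)) := by positivity
  have hCt : ((4 - a) ^ 2 / (2 * (1 - a))) * (2 * (1 - a) / (4 - a)) = 4 - a := by
    field_simp
  nlinarith [mul_le_mul_of_nonneg_left (sub_le_sub_left hkey b) (le_of_lt hC)]
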